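/- Let X be an irreducible shift of finite type, Y a sofic shift, pi: X -> Y a finite-to-one factor code, and f: Y -> R continuous. Then the topological pressures agree: P_X(sigma, f o pi) = P_Y(sigma, f). Moreover, if nu is an equilibrium measure for f on Y, then any shift-invariant lift mu of nu (pi_* mu = nu) is an equilibrium measure for f o pi on X. -/

import Mathlib

open MeasureTheory

/-- The left shift by `k` on bi-infinite sequences. `shiftZ 1` is the shift map `σ`. -/
def shiftZ {A : Type*} (k : ℤ) (x : ℤ → A) : ℤ → A := fun n => x (n + k)

/-- The word `w` occurs in `x` at position `i`. -/
def occursAt {A : Type*} (x : ℤ → A) (w : List A) (i : ℤ) : Prop :=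
  ∀ j : Fin w.length, x (i + (j.1 : ℤ)) = w.get j

/-- The word `w` belongs to the language of `X`. -/
def InLanguage {A : Type*} (X : Set (ℤ → A)) (w : List A) : Prop :=
  ∃ x ∈ X, ∃ i : ℤ, occursAt x w i

/-- A shift space: a closed, shift-invariant subset of the full shift. -/
def IsShiftSpace {A : Type*} [TopologicalSpace A] (X : Set (ℤ → A)) : Prop :=
  IsClosed X ∧ ∀ k : ℤ, ∀ x ∈ X, shiftZ k x ∈ X

/-- `x` is doubly transitive in `X`. -/
def DoublyTransitive {A : Type*} (X : Set (ℤ → A)) (x : ℤ → A) : Prop :=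
  ∀ w : List A, InLanguage X w →
    (∀ N : ℤ, ∃ i : ℤ, N ≤ i ∧ occursAt x w i) ∧
    (∀ N : ℤ, ∃ i : ℤ, i ≤ N ∧ occursAt x w i)

/-- Irreducibility: any two words of the language can be joined within the language. -/
def IrreducibleShift {A : Type*} (X : Set (ℤ → A)) : Prop :=
  ∀ u v : List A, InLanguage X u → InLanguage X v →
    ∃ w : List A, InLanguage X (u ++ w ++ v)

/-- `μ` is fully supported on `X`: every open set meeting `X` has positive measure. -/
def FullSupportOn {A : Type*} [TopologicalSpace A] [MeasurableSpace A]
    (μ : Measure (ℤ → A)) (X : Set (ℤ → A)) : Prop :=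
  ∀ U : Set (ℤ → A), IsOpen U → (U ∩ X).Nonempty → 0 < μ U

/-- A shift of finite type: defined by excluding a finite set of words of some length `n`. -/
def IsSFT {A : Type*} (X : Set (ℤ → A)) : Prop :=
  ∃ (n : ℕ) (F : Finset (List A)),
    X = {x | ∀ i : ℤ, (List.ofFn fun j : Fin n => x (i + (j.1 : ℤ))) ∉ F}

/-- `μ` is an equilibrium measure for `f` on `(X, T)`, with respect to an entropy
functional `ent`. -/
def IsEquilibriumFor {A : Type*} [MeasurableSpace A]
    (ent : Measure (ℤ → A) → ℝ) (T : (ℤ → A) → (ℤ → A)) (X : Set (ℤ → A))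
    (f : (ℤ → A) → ℝ) (μ : Measure (ℤ → A)) : Prop :=
  IsProbabilityMeasure μ ∧ μ X = 1 ∧ μ.map T = μ ∧
    ∀ lam : Measure (ℤ → A), IsProbabilityMeasure lam → lam X = 1 → lam.map T = lam →
      ent lam + ∫ x, f x ∂lam ≤ ent μ + ∫ x, f x ∂μ

/-- The topological pressure of `f` on `(X, σ)`, defined variationally with respect to an
entropy functional `ent`: the sup of `ent μ + ∫ f dμ` over shift-invariant probability
measures concentrated on `X`. -/
noncomputable def pressureOf {A : Type*} [MeasurableSpace A]
    (ent : Measure (ℤ → A) → ℝ) (X : Set (ℤ → A)) (f : (ℤ → A) → ℝ) : ℝ :=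
  sSup {r : ℝ | ∃ μ : Measure (ℤ → A), IsProbabilityMeasure μ ∧ μ X = 1 ∧
    μ.map (shiftZ 1) = μ ∧ r = ent μ + ∫ x, f x ∂μ}


section AuxShift
lemma shiftZ_shiftZ {A : Type*} (a b : ℤ) (x : ℤ → A) :
    shiftZ a (shiftZ b x) = shiftZ (a + b) x := by
  funext n; simp [shiftZ, add_assoc]

lemma shiftZ_zero {A : Type*} (x : ℤ → A) : shiftZ 0 x = x := by
  funext n; simp [shiftZ]

lemma continuous_shiftZ {A : Type*} [TopologicalSpace A] (k : ℤ) :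
    Continuous (shiftZ k : (ℤ → A) → (ℤ → A)) :=
  continuous_pi fun n => continuous_apply (n + k)

lemma shiftZ_leftInv {A : Type*} (k : ℤ) (x : ℤ → A) : shiftZ (-k) (shiftZ k x) = x := by
  rw [shiftZ_shiftZ]; simp [shiftZ_zero]

lemma shiftZ_injective {A : Type*} (k : ℤ) : Function.Injective (shiftZ k : (ℤ → A) → (ℤ → A)) :=
  Function.LeftInverse.injective (g := shiftZ (-k)) (fun x => shiftZ_leftInv k x)

end AuxShift

section AuxLift
open Set
variable {A B : Type*} [Fintype A] [TopologicalSpace A] [DiscreteTopology A]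
    [MeasurableSpace A] [BorelSpace A]
    [Fintype B] [TopologicalSpace B] [DiscreteTopology B]
    [MeasurableSpace B] [BorelSpace B]

/-- Counting function of fibers intersected with a set. -/
noncomputable def cF (X : Set (ℤ → A)) (π : (ℤ → A) → (ℤ → B)) (E : Set (ℤ → A)) :
    (ℤ → B) → ENNReal := fun y => Measure.count (E ∩ (X ∩ π ⁻¹' {y}))

/-- Cardinality characterization: `k+1 ≤ count s` iff there is an injective tuple in `s`. -/
lemma le_count_iff_tuple {α : Type*} [MeasurableSpace α] [MeasurableSingletonClass α]
    {s : Set α} (hs : s.Finite) (k : ℕ) :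
    ((k : ENNReal) + 1) ≤ Measure.count s ↔
      ∃ v : Fin (k + 1) → α, Function.Injective v ∧ ∀ i, v i ∈ s := by
  classical
  rw [Measure.count_apply_finite s hs]
  constructor
  · intro h
    have hk : k + 1 ≤ hs.toFinset.card := by exact_mod_cast h
    obtain ⟨t, hts, htc⟩ := Finset.exists_subset_card_eq hk
    have e : Fin (k + 1) ≃ t := (Fin.castOrderIso htc.symm).toEquiv.trans t.equivFin.symm
    refine ⟨fun i => (e i : α), fun i j hij => e.injective (Subtype.ext hij), fun i => ?_⟩
    exact hs.mem_toFinset.mp (hts (e i).2)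
  · rintro ⟨v, hinj, hmem⟩
    have : (Finset.univ.image v).card ≤ hs.toFinset.card := by
      apply Finset.card_le_card
      intro x hx
      obtain ⟨i, _, rfl⟩ := Finset.mem_image.mp hx
      exact hs.mem_toFinset.mpr (hmem i)
    rw [Finset.card_image_of_injective _ hinj, Finset.card_univ, Fintype.card_fin] at this
    exact_mod_cast this

lemma measurableSet_le_cF (X : Set (ℤ → A)) (hXc : IsClosed X)
    {π : (ℤ → A) → (ℤ → B)} (hπ : Continuous π) {E : Set (ℤ → A)} (hE : IsClosed E) (k : ℕ) :
    MeasurableSet {y : ℤ → B | ∃ v : Fin (k + 1) → (ℤ → A),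
      Function.Injective v ∧ ∀ i, v i ∈ E ∩ (X ∩ π ⁻¹' {y})} := by
  classical
  set S : Set (Fin (k + 1) → ℤ → A) :=
    {v | (∀ i, v i ∈ E ∩ X) ∧ ∀ i, π (v i) = π (v 0)} with hS
  set D : ℕ → Set (Fin (k + 1) → ℤ → A) :=
    fun m => {v | ∀ i j : Fin (k + 1), i ≠ j → ∃ t : ℤ, t.natAbs ≤ m ∧ v i t ≠ v j t} with hD
  have hSc : IsClosed S := by
    refine IsClosed.inter ?_ ?_
    · show IsClosed {v : Fin (k+1) → ℤ → A | ∀ i, v i ∈ E ∩ X}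
      have : {v : Fin (k+1) → ℤ → A | ∀ i, v i ∈ E ∩ X} = ⋂ i, (fun v => v i) ⁻¹' (E ∩ X) := by
        ext v; simp
      rw [this]
      exact isClosed_iInter fun i => (hE.inter hXc).preimage (continuous_apply i)
    · show IsClosed {v : Fin (k+1) → ℤ → A | ∀ i, π (v i) = π (v 0)}
      have : {v : Fin (k+1) → ℤ → A | ∀ i, π (v i) = π (v 0)} =
        ⋂ i, {v | π (v i) = π (v 0)} := by ext v; simp
      rw [this]
      exact isClosed_iInter fun i =>
        isClosed_eq (hπ.comp (continuous_apply i)) (hπ.comp (continuous_apply 0))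
  have hDc : ∀ m, IsClosed (D m) := by
    intro m
    have : D m = ⋂ i, ⋂ j, {v : Fin (k+1) → ℤ → A |
        i ≠ j → ∃ t : ℤ, t.natAbs ≤ m ∧ v i t ≠ v j t} := by
      ext v; simp [hD]
    rw [this]
    refine isClosed_iInter fun i => isClosed_iInter fun j => ?_
    by_cases hij : i = j
    · simp [hij]
    · have : {v : Fin (k+1) → ℤ → A | i ≠ j → ∃ t : ℤ, t.natAbs ≤ m ∧ v i t ≠ v j t} =
          ⋃ t ∈ {t : ℤ | t.natAbs ≤ m}, {v | v i t ≠ v j t} := by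
        ext v; simp [hij]
      rw [this]
      refine Set.Finite.isClosed_biUnion ?_ fun t _ => ?_
      · refine Set.Finite.subset (Set.finite_Icc (-(m:ℤ)) m) fun t ht => ?_
        simp only [Set.mem_setOf_eq] at ht
        constructor <;> omega
      · have hopen : IsOpen {v : Fin (k+1) → ℤ → A | v i t = v j t} := by
          have hcont : Continuous fun v : Fin (k+1) → ℤ → A => (v i t, v j t) :=
            ((continuous_apply t).comp (continuous_apply i)).prodMk
              ((continuous_apply t).comp (continuous_apply j))
          exact (isOpen_discrete {p : A × A | p.1 = p.2}).preimage hcont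
        exact isClosed_compl_iff.mpr hopen
  have heq : {y : ℤ → B | ∃ v : Fin (k + 1) → (ℤ → A),
      Function.Injective v ∧ ∀ i, v i ∈ E ∩ (X ∩ π ⁻¹' {y})} =
      ⋃ m : ℕ, (fun v : Fin (k+1) → ℤ → A => π (v 0)) '' (S ∩ D m) := by
    ext y
    simp only [Set.mem_setOf_eq, Set.mem_iUnion, Set.mem_image]
    constructor
    · rintro ⟨v, hinj, hmem⟩
      have key : ∀ p : Fin (k+1) × Fin (k+1), p.1 ≠ p.2 → ∃ t : ℤ, v p.1 t ≠ v p.2 t := by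
        intro p hp
        by_contra hcon
        push_neg at hcon
        exact hp (hinj (funext hcon))
      set f : Fin (k+1) × Fin (k+1) → ℕ := fun p =>
        if h : p.1 ≠ p.2 then (key p h).choose.natAbs else 0 with hf
      refine ⟨Finset.univ.sup f, v, ⟨⟨fun i => ⟨(hmem i).1, (hmem i).2.1⟩, fun i => ?_⟩, ?_⟩, ?_⟩
      · have h0 := (hmem i).2.2
        have h1 := (hmem 0).2.2
        simp only [Set.mem_preimage, Set.mem_singleton_iff] at h0 h1
        rw [h0, h1]
      · intro i j hij
        refine ⟨(key (i, j) hij).choose, ?_, (key (i, j) hij).choose_spec⟩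
        have : f (i, j) = (key (i, j) hij).choose.natAbs := by simp [hf, hij]
        rw [← this]
        exact Finset.le_sup (Finset.mem_univ _)
      · have := (hmem 0).2.2
        simpa using this
    · rintro ⟨m, v, ⟨⟨hv1, hv2⟩, hv3⟩, rfl⟩
      refine ⟨v, fun i j hij => ?_, fun i => ⟨(hv1 i).1, (hv1 i).2, ?_⟩⟩
      · by_contra hne
        obtain ⟨t, _, hvt⟩ := hv3 i j hne
        exact hvt (congrFun hij t)
      · simp [hv2 i]
  rw [heq]
  refine MeasurableSet.iUnion fun m => ?_
  have hcomp : IsCompact (S ∩ D m) := ((hSc.inter (hDc m)).isCompact)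
  have : IsCompact ((fun v : Fin (k+1) → ℤ → A => π (v 0)) '' (S ∩ D m)) :=
    hcomp.image (hπ.comp (continuous_apply 0))
  exact this.isClosed.measurableSet

lemma measurable_cF_closed (X : Set (ℤ → A)) (hXc : IsClosed X)
    {π : (ℤ → A) → (ℤ → B)} (hπ : Continuous π)
    (hfib : ∀ y, (X ∩ π ⁻¹' {y}).Finite)
    {E : Set (ℤ → A)} (hE : IsClosed E) :
    Measurable (cF X π E) := by
  classical
  have hfinE : ∀ y, (E ∩ (X ∩ π ⁻¹' {y})).Finite := fun y => (hfib y).subset inter_subset_right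
  have hpt : ∀ y, cF X π E y = ∑' k : ℕ,
      Set.indicator {y' : ℤ → B | ((k : ENNReal) + 1) ≤ cF X π E y'} (fun _ => 1) y := by
    intro y
    obtain ⟨n, hn⟩ : ∃ n : ℕ, cF X π E y = n :=
      ⟨(hfinE y).toFinset.card, Measure.count_apply_finite _ (hfinE y)⟩
    rw [hn]
    have hterm : ∀ k : ℕ, Set.indicator {y' : ℤ → B | ((k : ENNReal) + 1) ≤ cF X π E y'}
        (fun _ => (1:ENNReal)) y = if k < n then 1 else 0 := by
      intro k
      by_cases h : k < n
      · rw [Set.indicator_of_mem, if_pos h]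
        simp only [Set.mem_setOf_eq, hn]
        exact_mod_cast Nat.succ_le_of_lt h
      · rw [Set.indicator_of_notMem, if_neg h]
        simp only [Set.mem_setOf_eq, hn, not_le]
        exact_mod_cast Nat.lt_succ_of_le (Nat.le_of_not_lt h)
    simp_rw [hterm]
    rw [tsum_eq_sum (s := Finset.range n) (fun k hk => if_neg (by simpa using hk))]
    rw [Finset.sum_congr rfl (fun k hk => if_pos (Finset.mem_range.mp hk))]
    simp
  have : cF X π E = fun y => ∑' k : ℕ,
      Set.indicator {y' : ℤ → B | ((k : ENNReal) + 1) ≤ cF X π E y'} (fun _ => 1) y :=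
    funext hpt
  rw [this]
  refine Measurable.ennreal_tsum fun k => Measurable.indicator measurable_const ?_
  have hset : {y' : ℤ → B | ((k : ENNReal) + 1) ≤ cF X π E y'} =
      {y : ℤ → B | ∃ v : Fin (k + 1) → (ℤ → A),
        Function.Injective v ∧ ∀ i, v i ∈ E ∩ (X ∩ π ⁻¹' {y})} := by
    ext y
    simp only [Set.mem_setOf_eq]
    exact le_count_iff_tuple (hfinE y) k
  rw [hset]
  exact measurableSet_le_cF X hXc hπ hE k

lemma measurable_cF (X : Set (ℤ → A)) (hXc : IsClosed X)
    {π : (ℤ → A) → (ℤ → B)} (hπ : Continuous π)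
    (hfib : ∀ y, (X ∩ π ⁻¹' {y}).Finite)
    {E : Set (ℤ → A)} (hE : MeasurableSet E) :
    Measurable (cF X π E) := by
  have hgen : (inferInstance : MeasurableSpace (ℤ → A)) =
      MeasurableSpace.generateFrom {E : Set (ℤ → A) | IsClosed E} := by
    rw [BorelSpace.measurable_eq (α := ℤ → A), borel_eq_generateFrom_isClosed]
  have hpi : IsPiSystem {E : Set (ℤ → A) | IsClosed E} :=
    fun s hs t ht _ => hs.inter ht
  revert E
  refine fun {E} => MeasurableSpace.induction_on_inter (C := fun E _ => Measurable (cF X π E))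
    hgen hpi ?_ ?_ ?_ ?_ (t := E)
  · show Measurable (cF X π ∅)
    have h0 : cF X π ∅ = fun _ => 0 := by funext y; simp [cF]
    rw [h0]; exact measurable_const
  · exact fun t ht => measurable_cF_closed X hXc hπ hfib ht
  · intro t htm iht
    show Measurable (cF X π tᶜ)
    have huniv : Measurable (cF X π Set.univ) :=
      measurable_cF_closed X hXc hπ hfib isClosed_univ
    have hpt : ∀ y, cF X π tᶜ y = cF X π Set.univ y - cF X π t y := by
      intro y
      have hdisj : cF X π t y + cF X π tᶜ y = cF X π Set.univ y := by
        unfold cF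
        rw [Set.univ_inter, ← measure_inter_add_diff (X ∩ π ⁻¹' {y}) htm]
        congr 1
        · rw [Set.inter_comm]
        · rw [Set.diff_eq, Set.inter_comm]
      have hne : cF X π t y ≠ ⊤ := by
        rw [cF, Measure.count_apply_finite _ ((hfib y).subset inter_subset_right)]
        exact ENNReal.natCast_ne_top _
      rw [← hdisj, ENNReal.add_sub_cancel_left hne]
    rw [funext hpt]; exact huniv.sub iht
  · intro f hdisj hfm ihf
    show Measurable (cF X π (⋃ i, f i))
    have hpt : ∀ y, cF X π (⋃ i, f i) y = ∑' i, cF X π (f i) y := by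
      intro y
      unfold cF
      rw [Set.iUnion_inter]
      exact measure_iUnion (fun i j hij => ((hdisj hij).mono inter_subset_left
        inter_subset_left)) (fun i => (hfm i).inter (hXc.measurableSet.inter
          (hπ.measurable (measurableSet_singleton y))))
    simpa [funext hpt] using Measurable.ennreal_tsum ihf

lemma fiber_shift (X : Set (ℤ → A)) (hXi : ∀ k : ℤ, ∀ x ∈ X, shiftZ k x ∈ X)
    {π : (ℤ → A) → (ℤ → B)}
    (hequiv : ∀ x ∈ X, π (shiftZ 1 x) = shiftZ 1 (π x)) (E : Set (ℤ → A)) (y : ℤ → B) :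
    E ∩ (X ∩ π ⁻¹' {shiftZ 1 y}) =
      (shiftZ 1) '' ((shiftZ 1 ⁻¹' E) ∩ (X ∩ π ⁻¹' {y})) := by
  ext x
  constructor
  · rintro ⟨hxE, hxX, hxπ⟩
    simp only [Set.mem_preimage, Set.mem_singleton_iff] at hxπ
    refine ⟨shiftZ (-1) x, ⟨?_, ?_, ?_⟩, ?_⟩
    · show shiftZ 1 (shiftZ (-1) x) ∈ E
      rw [shiftZ_shiftZ]; norm_num; rwa [shiftZ_zero]
    · exact hXi (-1) x hxX
    · simp only [Set.mem_preimage, Set.mem_singleton_iff]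
      apply shiftZ_injective (1 : ℤ)
      have := hequiv (shiftZ (-1) x) (hXi (-1) x hxX)
      rw [← this, shiftZ_shiftZ]
      norm_num
      rw [shiftZ_zero, hxπ]
    · rw [shiftZ_shiftZ]; norm_num; exact shiftZ_zero x
  · rintro ⟨x', hx'mem, rfl⟩
    obtain ⟨hE', hX', hπ'⟩ := hx'mem
    simp only [Set.mem_preimage, Set.mem_singleton_iff] at hE' hπ'
    refine ⟨hE', hXi 1 x' hX', ?_⟩
    simp only [Set.mem_preimage, Set.mem_singleton_iff]
    rw [hequiv x' hX', hπ']

lemma count_shift_image (s : Set (ℤ → A)) (hs : s.Finite) :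
    Measure.count ((shiftZ 1) '' s) = Measure.count s := by
  classical
  rw [Measure.count_apply_finite _ (hs.image _), Measure.count_apply_finite _ hs]
  congr 1
  rw [Set.Finite.toFinset_image _ hs (hs.image _)]
  exact Finset.card_image_of_injective _ (shiftZ_injective 1)

/-- Existence of a shift-invariant lift of an invariant measure along a finite-to-one
factor code. -/
lemma exists_invariant_lift (X : Set (ℤ → A)) (hX : IsShiftSpace X)
    (Y : Set (ℤ → B)) (hY : IsShiftSpace Y)
    (π : (ℤ → A) → (ℤ → B)) (hcont : Continuous π)
    (hequiv : ∀ x ∈ X, π (shiftZ 1 x) = shiftZ 1 (π x))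
    (hsurj : π '' X = Y)
    (hfin : ∀ y ∈ Y, {x | x ∈ X ∧ π x = y}.Finite)
    (ν : Measure (ℤ → B)) (hν1 : IsProbabilityMeasure ν) (hνY : ν Y = 1)
    (hνinv : ν.map (shiftZ 1) = ν) :
    ∃ μ : Measure (ℤ → A), IsProbabilityMeasure μ ∧ μ X = 1 ∧
      μ.map (shiftZ 1) = μ ∧ μ.map π = ν := by
  classical
  have hfib : ∀ y, (X ∩ π ⁻¹' {y}).Finite := by
    intro y
    by_cases hy : y ∈ Y
    · have := hfin y hy
      have he : {x | x ∈ X ∧ π x = y} = X ∩ π ⁻¹' {y} := by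
        ext x; simp [Set.mem_inter_iff]
      rwa [he] at this
    · have : X ∩ π ⁻¹' {y} = ∅ := by
        ext x
        simp only [Set.mem_inter_iff, Set.mem_preimage, Set.mem_singleton_iff,
          Set.mem_empty_iff_false, iff_false, not_and]
        intro hx hpx
        exact hy (hsurj ▸ ⟨x, hx, hpx⟩)
      rw [this]; exact Set.finite_empty
  have hmeas : ∀ {E : Set (ℤ → A)}, MeasurableSet E →
      Measurable (fun y => (cF X π Set.univ y)⁻¹ * cF X π E y) := fun {E} hE =>
    ((measurable_cF X hX.1 hcont hfib MeasurableSet.univ).inv).mul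
      (measurable_cF X hX.1 hcont hfib hE)
  -- the lifted measure
  set μ : Measure (ℤ → A) := Measure.ofMeasurable
    (fun E _ => ∫⁻ y, (cF X π Set.univ y)⁻¹ * cF X π E y ∂ν)
    (by
      have h0 : cF X π (∅ : Set (ℤ → A)) = fun _ => 0 := by funext y; simp [cF]
      simp [h0])
    (by
      intro f hfm hdisj
      have hpt : ∀ y, cF X π (⋃ i, f i) y = ∑' i, cF X π (f i) y := by
        intro y
        unfold cF
        rw [Set.iUnion_inter]
        exact measure_iUnion (fun i j hij => ((hdisj hij).mono Set.inter_subset_left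
          Set.inter_subset_left)) (fun i => (hfm i).inter (hX.1.measurableSet.inter
            (hcont.measurable (measurableSet_singleton y))))
      calc ∫⁻ y, (cF X π Set.univ y)⁻¹ * cF X π (⋃ i, f i) y ∂ν
          = ∫⁻ y, ∑' i, (cF X π Set.univ y)⁻¹ * cF X π (f i) y ∂ν := by
            apply lintegral_congr
            intro y
            rw [hpt y, ENNReal.tsum_mul_left]
        _ = ∑' i, ∫⁻ y, (cF X π Set.univ y)⁻¹ * cF X π (f i) y ∂ν :=
            lintegral_tsum fun i => (hmeas (hfm i)).aemeasurable) with hμ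
  have happ : ∀ {E : Set (ℤ → A)}, MeasurableSet E →
      μ E = ∫⁻ y, (cF X π Set.univ y)⁻¹ * cF X π E y ∂ν := fun {E} hE =>
    Measure.ofMeasurable_apply E hE
  -- a.e. facts
  have haeY : ∀ᵐ y ∂ν, y ∈ Y := by
    rw [ae_iff]
    have : {y | ¬ y ∈ Y} = Yᶜ := rfl
    rw [this, measure_compl hY.1.measurableSet (measure_ne_top _ _), hνY, measure_univ,
      tsub_self]
  have hone : ∀ y ∈ Y, (cF X π Set.univ y)⁻¹ * cF X π Set.univ y = 1 := by
    intro y hy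
    have hfin' := hfib y
    have hnonempty : (Set.univ ∩ (X ∩ π ⁻¹' {y})).Nonempty := by
      obtain ⟨x, hx, hpx⟩ := hsurj ▸ hy
      exact ⟨x, Set.mem_univ x, hx, by simp [hpx]⟩
    have hfinu : (Set.univ ∩ (X ∩ π ⁻¹' {y})).Finite := by
      rw [Set.univ_inter]; exact hfin'
    have hcard : cF X π Set.univ y = (hfinu.toFinset.card : ENNReal) :=
      Measure.count_apply_finite _ hfinu
    have hpos : hfinu.toFinset.card ≠ 0 := by
      simp only [ne_eq, Finset.card_eq_zero]
      intro hempty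
      obtain ⟨x, hx⟩ := hnonempty
      have h2 : x ∈ hfinu.toFinset := hfinu.mem_toFinset.mpr hx
      rw [hempty] at h2
      exact Finset.notMem_empty x h2
    rw [hcard]
    exact ENNReal.inv_mul_cancel (by exact_mod_cast hpos) (ENNReal.natCast_ne_top _)
  have hμuniv : μ Set.univ = 1 := by
    rw [happ MeasurableSet.univ]
    calc ∫⁻ y, (cF X π Set.univ y)⁻¹ * cF X π Set.univ y ∂ν = ∫⁻ _, 1 ∂ν := by
          apply lintegral_congr_ae
          refine haeY.mono fun y hy => ?_
          show (cF X π Set.univ y)⁻¹ * cF X π Set.univ y = 1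
          exact hone y hy
      _ = 1 := by simp
  have hprob : IsProbabilityMeasure μ := ⟨hμuniv⟩
  have hμX : μ X = 1 := by
    rw [happ hX.1.measurableSet]
    have : ∀ y, cF X π X y = cF X π Set.univ y := by
      intro y
      unfold cF
      rw [Set.univ_inter, Set.inter_eq_self_of_subset_right Set.inter_subset_left]
    calc ∫⁻ y, (cF X π Set.univ y)⁻¹ * cF X π X y ∂ν
        = ∫⁻ _, 1 ∂ν := by
          apply lintegral_congr_ae
          refine haeY.mono fun y hy => ?_
          show (cF X π Set.univ y)⁻¹ * cF X π X y = 1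
          rw [this y]; exact hone y hy
      _ = 1 := by simp
  refine ⟨μ, hprob, hμX, ?_, ?_⟩
  · -- shift invariance
    apply Measure.ext
    intro E hE
    rw [Measure.map_apply (continuous_shiftZ 1).measurable hE,
      happ (hE.preimage (continuous_shiftZ 1).measurable), happ hE]
    have hpt : ∀ y, (cF X π Set.univ y)⁻¹ * cF X π (shiftZ 1 ⁻¹' E) y =
        ((cF X π Set.univ (shiftZ 1 y))⁻¹ * cF X π E (shiftZ 1 y)) := by
      intro y
      have h1 : cF X π E (shiftZ 1 y) = cF X π (shiftZ 1 ⁻¹' E) y := by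
        unfold cF
        rw [fiber_shift X hX.2 hequiv E y,
          count_shift_image _ ((hfib y).subset Set.inter_subset_right)]
      have h2 : cF X π Set.univ (shiftZ 1 y) = cF X π Set.univ y := by
        unfold cF
        rw [fiber_shift X hX.2 hequiv Set.univ y,
          count_shift_image _ ((hfib y).subset Set.inter_subset_right), Set.preimage_univ]
      rw [h1, h2]
    calc ∫⁻ y, (cF X π Set.univ y)⁻¹ * cF X π (shiftZ 1 ⁻¹' E) y ∂ν
        = ∫⁻ y, ((cF X π Set.univ (shiftZ 1 y))⁻¹ * cF X π E (shiftZ 1 y)) ∂ν :=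
          lintegral_congr hpt
      _ = ∫⁻ y, (cF X π Set.univ y)⁻¹ * cF X π E y ∂(ν.map (shiftZ 1)) :=
          (lintegral_map (hmeas hE) (continuous_shiftZ 1).measurable).symm
      _ = ∫⁻ y, (cF X π Set.univ y)⁻¹ * cF X π E y ∂ν := by rw [hνinv]
  · -- pushforward equals ν
    apply Measure.ext
    intro E' hE'
    rw [Measure.map_apply hcont.measurable hE', happ (hE'.preimage hcont.measurable)]
    have hpt : ∀ y ∈ Y, (cF X π Set.univ y)⁻¹ * cF X π (π ⁻¹' E') y =
        Set.indicator E' (fun _ => 1) y := by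
      intro y hy
      by_cases hyE : y ∈ E'
      · have : cF X π (π ⁻¹' E') y = cF X π Set.univ y := by
          unfold cF
          congr 1
          rw [Set.univ_inter]
          apply Set.inter_eq_self_of_subset_right
          intro x hx
          have hpx : π x ∈ ({y} : Set (ℤ → B)) := hx.2
          simp only [Set.mem_singleton_iff] at hpx
          simp [Set.mem_preimage, hpx, hyE]
        rw [this, hone y hy, Set.indicator_of_mem hyE]
      · have : cF X π (π ⁻¹' E') y = 0 := by
          have hset : π ⁻¹' E' ∩ (X ∩ π ⁻¹' {y}) = ∅ := by
            rw [Set.eq_empty_iff_forall_notMem]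
            intro x hx
            have h1 : π x ∈ E' := hx.1
            have h2 : π x ∈ ({y} : Set (ℤ → B)) := hx.2.2
            simp only [Set.mem_singleton_iff] at h2
            exact hyE (h2 ▸ h1)
          unfold cF
          rw [hset, measure_empty]
        rw [this, mul_zero, Set.indicator_of_notMem hyE]
    calc ∫⁻ y, (cF X π Set.univ y)⁻¹ * cF X π (π ⁻¹' E') y ∂ν
        = ∫⁻ y, Set.indicator E' (fun _ => 1) y ∂ν := by
          apply lintegral_congr_ae
          refine haeY.mono fun y hy => ?_
          show (cF X π Set.univ y)⁻¹ * cF X π (π ⁻¹' E') y = Set.indicator E' (fun _ => 1) y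
          exact hpt y hy
      _ = ν E' := by rw [lintegral_indicator hE' (fun _ => 1)]; simp

lemma push_props (X : Set (ℤ → A)) (Y : Set (ℤ → B)) (hYc : IsClosed Y)
    (π : (ℤ → A) → (ℤ → B)) (hcont : Continuous π)
    (hequiv : ∀ x ∈ X, π (shiftZ 1 x) = shiftZ 1 (π x))
    (hsurj : π '' X = Y) (hXm : MeasurableSet X)
    (μ : Measure (ℤ → A)) (hp : IsProbabilityMeasure μ) (hX1 : μ X = 1)
    (hinv : μ.map (shiftZ 1) = μ) :
    IsProbabilityMeasure (μ.map π) ∧ (μ.map π) Y = 1 ∧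
      (μ.map π).map (shiftZ 1) = μ.map π := by
  refine ⟨Measure.isProbabilityMeasure_map hcont.measurable.aemeasurable, ?_, ?_⟩
  · rw [Measure.map_apply hcont.measurable hYc.measurableSet]
    refine le_antisymm prob_le_one ?_
    have hsub : X ⊆ π ⁻¹' Y := fun x hx => hsurj ▸ Set.mem_image_of_mem π hx
    calc (1 : ENNReal) = μ X := hX1.symm
      _ ≤ μ (π ⁻¹' Y) := measure_mono hsub
  · have hae : ∀ᵐ x ∂μ, x ∈ X := by
      rw [ae_iff]
      have h0 : {x | ¬ x ∈ X} = Xᶜ := rfl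
      rw [h0, measure_compl hXm (measure_ne_top _ _), hX1, measure_univ, tsub_self]
    have hcongr : (shiftZ 1 ∘ π : (ℤ → A) → ℤ → B) =ᵐ[μ] (π ∘ shiftZ 1) :=
      hae.mono fun x hx => (hequiv x hx).symm
    calc (μ.map π).map (shiftZ 1)
        = μ.map (shiftZ 1 ∘ π) :=
          Measure.map_map (continuous_shiftZ 1).measurable hcont.measurable
      _ = μ.map (π ∘ shiftZ 1) := Measure.map_congr hcongr
      _ = (μ.map (shiftZ 1)).map π :=
          (Measure.map_map hcont.measurable (continuous_shiftZ 1).measurable).symm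
      _ = μ.map π := by rw [hinv]

end AuxLift

/-- for a finite-to-one factor code `π` from an irreducible SFT `X` onto a
sofic shift `Y` (entropy being preserved along `π`), the pressures of `f ∘ π` and `f`
coincide, and every shift-invariant lift of an equilibrium measure for `f` on `Y` is an
equilibrium measure for `f ∘ π` on `X`. -/
theorem stmt15 {A B : Type*} [Fintype A] [TopologicalSpace A] [DiscreteTopology A]
    [MeasurableSpace A] [BorelSpace A]
    [Fintype B] [TopologicalSpace B] [DiscreteTopology B]
    [MeasurableSpace B] [BorelSpace B]
    (X : Set (ℤ → A)) (hX : IsShiftSpace X) (hSFT : IsSFT X) (hirr : IrreducibleShift X)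
    (Y : Set (ℤ → B)) (hY : IsShiftSpace Y)
    (π : (ℤ → A) → (ℤ → B)) (hcont : Continuous π)
    (hequiv : ∀ x ∈ X, π (shiftZ 1 x) = shiftZ 1 (π x))
    (hsurj : π '' X = Y)
    (hfin : ∀ y ∈ Y, {x | x ∈ X ∧ π x = y}.Finite)
    (f : (ℤ → B) → ℝ) (hf : Continuous f)
    (entX : Measure (ℤ → A) → ℝ) (entY : Measure (ℤ → B) → ℝ)
    (hent : ∀ μ : Measure (ℤ → A), IsProbabilityMeasure μ → μ X = 1 →
      μ.map (shiftZ 1) = μ → entY (μ.map π) = entX μ) :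
    pressureOf entX X (fun x => f (π x)) = pressureOf entY Y f ∧
    (∀ (ν : Measure (ℤ → B)) (μ : Measure (ℤ → A)),
      IsEquilibriumFor entY (shiftZ 1) Y f ν →
      IsProbabilityMeasure μ → μ X = 1 → μ.map (shiftZ 1) = μ → μ.map π = ν →
      IsEquilibriumFor entX (shiftZ 1) X (fun x => f (π x)) μ) := by
  have hXm : MeasurableSet X := hX.1.measurableSet
  have hint : ∀ lam : Measure (ℤ → A),
      ∫ y, f y ∂(lam.map π) = ∫ x, f (π x) ∂lam := fun lam =>
    integral_map hcont.measurable.aemeasurable hf.aestronglyMeasurable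
  constructor
  · -- equality of pressures
    apply congrArg sSup
    ext r
    simp only [Set.mem_setOf_eq]
    constructor
    · rintro ⟨μ, hp, hX1, hinv, rfl⟩
      obtain ⟨hp', hY1, hinv'⟩ :=
        push_props X Y hY.1 π hcont hequiv hsurj hXm μ hp hX1 hinv
      exact ⟨μ.map π, hp', hY1, hinv', by rw [hent μ hp hX1 hinv, hint μ]⟩
    · rintro ⟨ν, hp, hY1, hinv, rfl⟩
      obtain ⟨μ, hμp, hμX, hμinv, hμπ⟩ :=
        exists_invariant_lift X hX Y hY π hcont hequiv hsurj hfin ν hp hY1 hinv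
      refine ⟨μ, hμp, hμX, hμinv, ?_⟩
      have h1 : entY ν = entX μ := by rw [← hμπ]; exact hent μ hμp hμX hμinv
      have h2 : ∫ y, f y ∂ν = ∫ x, f (π x) ∂μ := by rw [← hμπ]; exact hint μ
      rw [h1, h2]
  · rintro ν μ ⟨hνp, hνY, hνinv, hνmax⟩ hμp hμX hμinv hμπ
    refine ⟨hμp, hμX, hμinv, ?_⟩
    intro lam hlp hlX hlinv
    obtain ⟨hp', hY1, hinv'⟩ :=
      push_props X Y hY.1 π hcont hequiv hsurj hXm lam hlp hlX hlinv
    have key := hνmax (lam.map π) hp' hY1 hinv'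
    calc entX lam + ∫ x, f (π x) ∂lam
        = entY (lam.map π) + ∫ y, f y ∂(lam.map π) := by
          rw [hent lam hlp hlX hlinv, hint lam]
      _ ≤ entY ν + ∫ y, f y ∂ν := key
      _ = entX μ + ∫ x, f (π x) ∂μ := by
          rw [← hμπ, hent μ hμp hμX hμinv, hint μ]
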